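/- Fix λ > 0 and ξ ∈ ℝ. As β → 0⁺, Γ(-β) ((λ - iξ)^β - λ^β) converges to -log(1 - iξ/λ), where log is the principal branch of the complex logarithm. -/

import Mathlib

open Complex Filter

theorem gts_limit_bilateral_gamma (l ξ : ℝ) (hl : 0 < l) :
    Filter.Tendsto
      (fun β : ℝ =>
        (Real.Gamma (-β) : ℂ) *
          (((l : ℂ) - Complex.I * (ξ : ℂ)) ^ (β : ℂ) - (l : ℂ) ^ (β : ℂ)))
      (nhdsWithin 0 (Set.Ioi 0))
      (nhds (-Complex.log (1 - Complex.I * (ξ : ℂ) / (l : ℂ)))) := by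
  set z : ℂ := (l : ℂ) - Complex.I * (ξ : ℂ) with hzdef
  have hl0 : (l : ℂ) ≠ 0 := by exact_mod_cast hl.ne'
  have hz0 : z ≠ 0 := by
    intro h
    have : z.re = 0 := by rw [h]; simp
    simp [hzdef, Complex.sub_re, Complex.mul_re] at this
    exact hl.ne' this
  -- the function equals  (-Γ(1-β)) * slope
  have hf : HasDerivAt (fun x : ℝ => z ^ (x : ℂ) - (l : ℂ) ^ (x : ℂ))
      (Complex.log z - Complex.log l) 0 := by
    have h1 : HasDerivAt (fun w : ℂ => z ^ w) (Complex.log z) 0 := by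
      simpa using (hasStrictDerivAt_const_cpow (x := z) (y := 0) (Or.inl hz0)).hasDerivAt
    have h2 : HasDerivAt (fun w : ℂ => (l : ℂ) ^ w) (Complex.log l) 0 := by
      simpa using (hasStrictDerivAt_const_cpow (x := (l : ℂ)) (y := 0) (Or.inl hl0)).hasDerivAt
    have := (h1.sub h2).comp_ofReal (z := 0)
    simpa using this
  have hslope : Tendsto (fun β : ℝ => (β : ℂ)⁻¹ * (z ^ (β : ℂ) - (l : ℂ) ^ (β : ℂ)))
      (nhdsWithin 0 (Set.Ioi 0)) (nhds (Complex.log z - Complex.log l)) := by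
    have := hasDerivAt_iff_tendsto_slope.mp hf
    have h' := this.mono_left (nhdsWithin_mono _ (by
      intro x hx
      exact Set.mem_compl_singleton_iff.mpr (ne_of_gt hx)))
    refine h'.congr (fun β => ?_)
    simp only [slope, vsub_eq_sub, sub_zero, Complex.real_smul, Complex.ofReal_inv,
      Complex.ofReal_zero, Complex.cpow_zero, sub_self]
  have hGamma : Tendsto (fun β : ℝ => (-(Real.Gamma (1 - β)) : ℂ))
      (nhdsWithin 0 (Set.Ioi 0)) (nhds (-1)) := by
    have hc : ContinuousAt Real.Gamma 1 := by
      refine (Real.differentiableAt_Gamma fun m => ?_).continuousAt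
      intro h
      have : (0:ℝ) < 1 := one_pos
      rw [h] at this
      simpa using this.trans_le (neg_nonpos.mpr (Nat.cast_nonneg m))
    have : Tendsto (fun β : ℝ => Real.Gamma (1 - β)) (nhdsWithin 0 (Set.Ioi 0))
        (nhds 1) := by
      have hsub : Tendsto (fun β : ℝ => 1 - β) (nhdsWithin 0 (Set.Ioi 0)) (nhds 1) := by
        have h0 : Tendsto (fun β : ℝ => 1 - β) (nhds (0:ℝ)) (nhds (1 - 0)) :=
          tendsto_const_nhds.sub tendsto_id
        simpa using h0.mono_left nhdsWithin_le_nhds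
      simpa [Real.Gamma_one, Function.comp_def] using hc.tendsto.comp hsub
    have := ((Complex.continuous_ofReal.tendsto 1).comp this).neg
    simpa using this
  have hmul := hGamma.mul hslope
  have hval : (-1 : ℂ) * (Complex.log z - Complex.log l)
      = -Complex.log (1 - Complex.I * (ξ : ℂ) / (l : ℂ)) := by
    have h1 : (1 : ℂ) - Complex.I * (ξ : ℂ) / (l : ℂ) = ((l⁻¹ : ℝ) : ℂ) * z := by
      field_simp [hzdef]
      rw [Complex.ofReal_div, Complex.ofReal_one, mul_one_div_cancel hl0, one_mul, hzdef]
    rw [h1, Complex.log_ofReal_mul (by positivity) hz0,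
      Real.log_inv, Complex.ofReal_neg, Complex.ofReal_log hl.le]
    ring
  rw [← hval]
  refine hmul.congr' ?_
  filter_upwards [self_mem_nhdsWithin] with β (hβ : 0 < β)
  have hβ0 : (-β : ℝ) ≠ 0 := by exact ne_of_lt (neg_neg_of_pos hβ)
  have hG : Real.Gamma (1 - β) = -β * Real.Gamma (-β) := by
    have := Real.Gamma_add_one (s := -β) (by simpa using hβ.ne')
    simpa [sub_eq_add_neg, add_comm] using this
  have hβc : (β : ℂ) ≠ 0 := by exact_mod_cast hβ.ne'
  rw [hG]
  push_cast
  field_simp
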